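/- Let α ≥ β ≥ -1/2 be real with α > -1/2, ρ = α + β + 1, and let ν be the Plancherel measure on ℝ. Let g : ℝ → ℂ be a measurable function such that for every n ∈ ℕ the function λ ↦ |λ|^(2n)·g(λ) belongs to L²(ℝ, ν), and suppose the ν-essential support of g is an unbounded subset of ℝ. Then liminf_{n→∞} (∫_ℝ |λ|^(4n)·|g(λ)|² dν(λ))^(1/(4n)) = +∞; equivalently, for every N > 0 the liminf of the sequence is at least N. -/

import Mathlib

open Complex MeasureTheory Filter

/-- The Harish-Chandra c-function of Cherednik–Opdam analysis on the real line,
`c_{α,β}(λ) = Γ(α+1)·2^(ρ−iλ)·Γ(iλ) / (Γ((ρ+iλ)/2)·Γ((α−β+1+iλ)/2))`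
with `ρ = α+β+1`. -/
noncomputable def cherednikC (α β : ℝ) (lam : ℂ) : ℂ :=
  Complex.Gamma ((α : ℂ) + 1) * (2 : ℂ) ^ (((α : ℂ) + (β : ℂ) + 1) - Complex.I * lam) *
      Complex.Gamma (Complex.I * lam) /
    (Complex.Gamma ((((α : ℂ) + (β : ℂ) + 1) + Complex.I * lam) / 2) *
      Complex.Gamma ((((α : ℂ) - (β : ℂ) + 1) + Complex.I * lam) / 2))

/-- The density of the Plancherel measure of the Cherednik–Opdam transform:
`λ ↦ |1 − ρ/(iλ)| / (8π·|c_{α,β}(λ)|²)` for `λ ≠ 0`, and `0` at `λ = 0`,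
where `ρ = α+β+1`. -/
noncomputable def plancherelDensity (α β : ℝ) (lam : ℝ) : ℝ :=
  if lam = 0 then 0 else
    ‖1 - ((α + β + 1 : ℝ) : ℂ) / (Complex.I * (lam : ℂ))‖ /
      (8 * Real.pi * ‖cherednikC α β (lam : ℂ)‖ ^ 2)

/-- The Plancherel measure `ν` of the Cherednik–Opdam transform on `ℝ`. -/
noncomputable def plancherelMeasure (α β : ℝ) : Measure ℝ :=
  volume.withDensity (fun lam => ENNReal.ofReal (plancherelDensity α β lam))

/-- The `ν`-essential support of `g`: the intersection of all closed sets outside of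
which `g` vanishes `ν`-almost everywhere. -/
def essSupport (ν : Measure ℝ) (g : ℝ → ℂ) : Set ℝ :=
  ⋂₀ {F : Set ℝ | IsClosed F ∧ ∀ᵐ lam ∂ν, lam ∉ F → g lam = 0}

/-- Unbounded-support case of the support-radius lemma: if `|·|^(2n)·g ∈ L²(ν)`
for all `n` and the `ν`-essential support of `g` is unbounded, then
`liminf_{n→∞} (∫ |λ|^(4n)|g(λ)|² dν)^(1/(4n)) = ∞`. -/
theorem cherednik_support_radius_unbounded
    (α β : ℝ) (hβ : -(1/2 : ℝ) ≤ β) (hβα : β ≤ α) (hα : -(1/2 : ℝ) < α)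
    (ρ : ℝ) (hρ : ρ = α + β + 1)
    (g : ℝ → ℂ) (hg : Measurable g)
    (hL2 : ∀ n : ℕ, MemLp (fun lam : ℝ => (|lam| ^ (2 * n) : ℝ) • g lam) 2
      (plancherelMeasure α β))
    (hunb : ¬ Bornology.IsBounded (essSupport (plancherelMeasure α β) g)) :
    Filter.liminf
      (fun n : ℕ =>
        (∫⁻ lam, ENNReal.ofReal (|lam| ^ (4 * n) * ‖g lam‖ ^ 2)
            ∂(plancherelMeasure α β)) ^ ((1 : ℝ) / (4 * n)))
      atTop = ⊤ := by

  set ν := plancherelMeasure α β with hν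
  have hgm : Measurable fun lam : ℝ => ENNReal.ofReal ((‖g lam‖) ^ 2) :=
    ENNReal.measurable_ofReal.comp ((continuous_norm.measurable.comp hg).pow_const 2)
  -- the mass of |g|² outside any ball is nonzero
  have key : ∀ N : ℝ, 0 < N →
      (∫⁻ lam in {x : ℝ | N < |x|}, ENNReal.ofReal ((‖g lam‖) ^ 2) ∂ν) ≠ 0 := by
    intro N hN h0
    apply hunb
    have hs : MeasurableSet {x : ℝ | N < |x|} := by
      have : {x : ℝ | N < |x|} = (Metric.closedBall (0 : ℝ) N)ᶜ := by
        ext x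
        simp [Metric.mem_closedBall, Real.dist_eq, not_le]
      rw [this]
      exact Metric.isClosed_closedBall.measurableSet.compl
    have hae0 : ∀ᵐ lam ∂(ν.restrict {x : ℝ | N < |x|}),
        ENNReal.ofReal ((‖g lam‖) ^ 2) = 0 :=
      (lintegral_eq_zero_iff hgm).1 h0
    have hae : ∀ᵐ lam ∂ν, lam ∈ {x : ℝ | N < |x|} →
        ENNReal.ofReal ((‖g lam‖) ^ 2) = 0 :=
      (ae_restrict_iff' hs).1 hae0
    have hsub : essSupport ν g ⊆ Metric.closedBall (0 : ℝ) N := by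
      apply Set.sInter_subset_of_mem
      refine ⟨Metric.isClosed_closedBall, ?_⟩
      filter_upwards [hae] with lam h hlam
      have hmem : N < |lam| := by
        simpa [Metric.mem_closedBall, Real.dist_eq, not_le] using hlam
      have h2 := h hmem
      rw [ENNReal.ofReal_eq_zero] at h2
      have habs : ‖g lam‖ = 0 := by
        have := sq_nonneg (‖g lam‖)
        nlinarith [norm_nonneg (g lam)]
      exact norm_eq_zero.1 habs
    exact Bornology.IsBounded.subset (Metric.isBounded_closedBall) hsub
  -- liminf is at least ofReal M for every M
  have hall : ∀ M : ℝ, ENNReal.ofReal M ≤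
      Filter.liminf
        (fun n : ℕ =>
          (∫⁻ lam, ENNReal.ofReal (|lam| ^ (4 * n) * (‖g lam‖) ^ 2)
              ∂ν) ^ ((1 : ℝ) / (4 * n))) atTop := by
    intro M
    rcases le_or_gt M 0 with hM | hM
    · simp [ENNReal.ofReal_eq_zero.2 hM]
    set N : ℝ := 2 * M with hNdef
    have hN : 0 < N := by positivity
    set s : Set ℝ := {x : ℝ | N < |x|} with hsdef
    have hs : MeasurableSet s := by
      have : s = (Metric.closedBall (0 : ℝ) N)ᶜ := by
        ext x
        simp [hsdef, Metric.mem_closedBall, Real.dist_eq, not_le]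
      rw [this]
      exact Metric.isClosed_closedBall.measurableSet.compl
    set c : ENNReal := ∫⁻ lam in s, ENNReal.ofReal ((‖g lam‖) ^ 2) ∂ν with hcdef
    have hc0 : c ≠ 0 := key N hN
    set e : ENNReal := min c 1 with hedef
    have he0 : e ≠ 0 := by
      simp only [hedef, ne_eq, min_eq_iff]
      push_neg
      constructor <;> intro h <;> simp_all
    have hetop : e ≠ ⊤ := by
      have : e ≤ 1 := min_le_right _ _
      exact ne_top_of_le_ne_top ENNReal.one_ne_top this
    set δ : ℝ := e.toReal with hδdef
    have hδ0 : 0 < δ := ENNReal.toReal_pos he0 hetop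
    have hδc : ENNReal.ofReal δ ≤ c := by
      rw [hδdef, ENNReal.ofReal_toReal hetop]
      exact min_le_left _ _
    -- δ^(1/(4n)) → 1
    have htend : Filter.Tendsto (fun n : ℕ => δ ^ ((1 : ℝ) / (4 * n))) atTop (nhds 1) := by
      have h1 : Filter.Tendsto (fun n : ℕ => (1 : ℝ) / (4 * n)) atTop (nhds 0) := by
        have h4 : Filter.Tendsto (fun n : ℕ => (4 : ℝ) * n) atTop atTop :=
          Filter.Tendsto.const_mul_atTop (by norm_num) tendsto_natCast_atTop_atTop
        simpa only [one_div, Pi.inv_def] using h4.inv_tendsto_atTop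
      have h2 : ContinuousAt (fun x : ℝ => δ ^ x) 0 :=
        Real.continuousAt_const_rpow (ne_of_gt hδ0)
      have := h2.tendsto.comp h1
      simpa [Real.rpow_zero, Function.comp_def] using this
    have hev1 : ∀ᶠ n : ℕ in atTop, (1 : ℝ) / 2 ≤ δ ^ ((1 : ℝ) / (4 * n)) :=
      htend.eventually (eventually_ge_nhds (by norm_num))
    have hev2 : ∀ᶠ n : ℕ in atTop, 1 ≤ n := Filter.eventually_ge_atTop 1
    refine Filter.le_liminf_of_le (by isBoundedDefault) ?_
    filter_upwards [hev1, hev2] with n hhalf hn1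
    have h4n : (0 : ℝ) < 4 * (n : ℝ) := by positivity
    -- lower bound the integral
    have step1 : ENNReal.ofReal (N ^ (4 * n)) * c ≤
        ∫⁻ lam, ENNReal.ofReal (|lam| ^ (4 * n) * (‖g lam‖) ^ 2) ∂ν := by
      have hb : ENNReal.ofReal (N ^ (4 * n)) * c =
          ∫⁻ lam in s, ENNReal.ofReal (N ^ (4 * n)) *
            ENNReal.ofReal ((‖g lam‖) ^ 2) ∂ν := by
        rw [hcdef, lintegral_const_mul _ hgm]
      rw [hb]
      refine le_trans (setLIntegral_mono' hs ?_) (setLIntegral_le_lintegral s _)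
      intro x hx
      rw [← ENNReal.ofReal_mul (by positivity)]
      apply ENNReal.ofReal_le_ofReal
      have hxN : N ≤ |x| := le_of_lt hx
      have : N ^ (4 * n) ≤ |x| ^ (4 * n) := pow_le_pow_left₀ hN.le hxN _
      nlinarith [sq_nonneg (‖g x‖)]
    have step2 : ENNReal.ofReal (N ^ (4 * n)) * ENNReal.ofReal δ ≤
        ENNReal.ofReal (N ^ (4 * n)) * c :=
      mul_le_mul_right hδc _
    have step3 := (step2.trans step1)
    have hrpow := ENNReal.rpow_le_rpow step3 (le_of_lt (by positivity : (0:ℝ) < 1 / (4 * (n:ℝ))))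
    refine le_trans ?_ hrpow
    -- compute the left side
    rw [ENNReal.mul_rpow_of_nonneg _ _ (by positivity)]
    have hA : (ENNReal.ofReal (N ^ (4 * n))) ^ ((1 : ℝ) / (4 * n)) = ENNReal.ofReal N := by
      rw [ENNReal.ofReal_pow hN.le, ← ENNReal.rpow_natCast (ENNReal.ofReal N) (4 * n),
        ← ENNReal.rpow_mul]
      have : ((4 * n : ℕ) : ℝ) * ((1 : ℝ) / (4 * n)) = 1 := by
        push_cast
        field_simp
      rw [this, ENNReal.rpow_one]
    have hB : (ENNReal.ofReal δ) ^ ((1 : ℝ) / (4 * n)) =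
        ENNReal.ofReal (δ ^ ((1 : ℝ) / (4 * n))) :=
      ENNReal.ofReal_rpow_of_pos hδ0
    rw [hA, hB, ← ENNReal.ofReal_mul hN.le]
    apply ENNReal.ofReal_le_ofReal
    calc M = N * (1 / 2) := by rw [hNdef]; ring
    _ ≤ N * (δ ^ ((1 : ℝ) / (4 * n))) := by
        apply mul_le_mul_of_nonneg_left hhalf hN.le
  -- conclude
  set L := Filter.liminf
      (fun n : ℕ =>
        (∫⁻ lam, ENNReal.ofReal (|lam| ^ (4 * n) * (‖g lam‖) ^ 2)
            ∂ν) ^ ((1 : ℝ) / (4 * n))) atTop with hL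
  rcases eq_or_ne L ⊤ with h | h
  · exact h
  · exfalso
    have h1 := hall (L.toReal + 1)
    have h2 : ENNReal.ofReal (L.toReal + 1) ≤ ENNReal.ofReal L.toReal := by
      rw [ENNReal.ofReal_toReal h]; exact h1
    rw [ENNReal.ofReal_le_ofReal_iff ENNReal.toReal_nonneg] at h2
    linarith
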